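/- Let A be an m-stochastic tensor with m ≥ 3, and q^(0) = α·e + (1−α)·p^(0) with α ∈ (0,1], e the uniform vector, and p^(0) a probability vector. Define q^(n+1) = A[q^(n),...,q^(n)]. Then q^(n) converges to e as n → ∞. -/

import Mathlib

open Finset

/-- An `m`-stochastic tensor of dimension `N`: all entries are nonnegative and
the sum over any single index (the others being fixed) equals `1`. -/
def MStochastic {N m : ℕ} (A : (Fin m → Fin N) → ℝ) : Prop :=
  (∀ f, 0 ≤ A f) ∧
    ∀ (t : Fin m) (f : Fin m → Fin N), ∑ v : Fin N, A (Function.update f t v) = 1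

/-- The multilinear action of the tensor `A`, with output in slot `t` and the
probability vector `p s` fed into each input slot `s ≠ t`:
`A[p]_{i} = Σ_{g, g t = i} A_g · Π_{s ≠ t} (p s)_{g s}`. -/
def mAct {N m : ℕ} (A : (Fin m → Fin N) → ℝ) (t : Fin m) (p : Fin m → Fin N → ℝ) :
    Fin N → ℝ :=
  fun i => ∑ g : Fin m → Fin N,
    if g t = i then A g * ∏ s ∈ Finset.univ.erase t, p s (g s) else 0

lemma marginal_sum {N m : ℕ} {A : (Fin m → Fin N) → ℝ} (hA : MStochastic A) :
    ∀ (k : ℕ) (T : Finset (Fin m)) (f : Fin m → Fin N), Tᶜ.card = k + 1 →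
      ∑ g ∈ univ.filter (fun g => ∀ s ∈ T, g s = f s), A g = (N : ℝ) ^ k := by
  intro k
  induction k with
  | zero =>
    intro T f hT
    obtain ⟨t, ht⟩ := Finset.card_eq_one.mp hT
    have htT : t ∉ T := by
      have : t ∈ Tᶜ := by simp [ht]
      simpa using this
    have hmem : ∀ s, s ≠ t → s ∈ T := by
      intro s hs
      by_contra h
      have : s ∈ Tᶜ := by simpa using h
      rw [ht] at this
      simp at this
      exact hs this
    rw [pow_zero, ← hA.2 t f]
    refine Finset.sum_bij' (fun g _ => g t) (fun v _ => Function.update f t v) ?_ ?_ ?_ ?_ ?_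
    · intro g hg; exact Finset.mem_univ _
    · intro v _
      simp only [Finset.mem_filter, Finset.mem_univ, true_and]
      intro s hs
      exact Function.update_of_ne (by rintro rfl; exact htT hs) _ _
    · intro g hg
      simp only [Finset.mem_filter, Finset.mem_univ, true_and] at hg
      show Function.update f t (g t) = g
      funext s
      by_cases hst : s = t
      · subst hst; simp
      · rw [Function.update_of_ne hst]; exact (hg s (hmem s hst)).symm
    · intro v _; simp
    · intro g hg
      simp only [Finset.mem_filter, Finset.mem_univ, true_and] at hg
      show A g = A (Function.update f t (g t))
      congr 1
      funext s
      by_cases hst : s = t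
      · subst hst; simp
      · rw [Function.update_of_ne hst]; exact hg s (hmem s hst)
  | succ k ih =>
    intro T f hT
    have hne : Tᶜ.Nonempty := by rw [← Finset.card_pos, hT]; omega
    obtain ⟨t, ht⟩ := hne
    have htT : t ∉ T := by simpa using ht
    rw [← Finset.sum_fiberwise (univ.filter (fun g => ∀ s ∈ T, g s = f s)) (fun g => g t) A]
    have key : ∀ v : Fin N,
        (univ.filter (fun g : Fin m → Fin N => ∀ s ∈ T, g s = f s)).filter (fun g => g t = v)
          = univ.filter (fun g : Fin m → Fin N => ∀ s ∈ insert t T, g s = Function.update f t v s) := by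
      intro v
      ext g
      simp only [Finset.mem_filter, Finset.mem_univ, true_and, Finset.mem_insert]
      constructor
      · rintro ⟨h1, h2⟩ s hs
        rcases hs with rfl | hs
        · simpa using h2
        · rw [Function.update_of_ne (by rintro rfl; exact htT hs)]; exact h1 s hs
      · intro h
        constructor
        · intro s hs
          rw [← Function.update_of_ne (show s ≠ t by rintro rfl; exact htT hs) v f]
          exact h s (Or.inr hs)
        · simpa using h t (Or.inl rfl)
    have hcard : ∀ v : Fin N, (insert t T)ᶜ.card = k + 1 := by
      intro v
      rw [Finset.compl_insert, Finset.card_erase_of_mem ht, hT]; omega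
    calc ∑ v : Fin N, ∑ g ∈ (univ.filter (fun g => ∀ s ∈ T, g s = f s)).filter (fun g => g t = v), A g
        = ∑ v : Fin N, (N : ℝ) ^ k := by
          refine Finset.sum_congr rfl fun v _ => ?_
          rw [key v]
          exact ih (insert t T) (Function.update f t v) (hcard v)
      _ = (N : ℝ) ^ (k + 1) := by
          rw [Finset.sum_const, Finset.card_univ, Fintype.card_fin]
          push_cast; ring
lemma wmarginal_sum {N m : ℕ} {A : (Fin m → Fin N) → ℝ} (hA : MStochastic A)
    {q : Fin N → ℝ} (hq : ∑ j, q j = 1) :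
    ∀ (T F : Finset (Fin m)) (f : Fin m → Fin N) (k : ℕ),
      Disjoint F T → (F ∪ T)ᶜ.card = k + 1 →
      ∑ g ∈ univ.filter (fun g : Fin m → Fin N => ∀ s ∈ F, g s = f s),
        A g * ∏ s ∈ T, q (g s) = (N : ℝ) ^ k := by
  intro T
  induction T using Finset.induction_on with
  | empty =>
    intro F f k _ hc
    simp only [Finset.prod_empty, mul_one]
    exact marginal_sum hA k F f (by simpa using hc)
  | insert t T' ht ih =>
    intro F f k hdis hc
    have htF : t ∉ F := Finset.disjoint_right.mp hdis (Finset.mem_insert_self t T')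
    rw [← Finset.sum_fiberwise (univ.filter (fun g : Fin m → Fin N => ∀ s ∈ F, g s = f s))
      (fun g => g t) (fun g => A g * ∏ s ∈ insert t T', q (g s))]
    have key : ∀ v : Fin N,
        (univ.filter (fun g : Fin m → Fin N => ∀ s ∈ F, g s = f s)).filter (fun g => g t = v)
          = univ.filter (fun g : Fin m → Fin N => ∀ s ∈ insert t F, g s = Function.update f t v s) := by
      intro v
      ext g
      simp only [Finset.mem_filter, Finset.mem_univ, true_and, Finset.mem_insert]
      constructor
      · rintro ⟨h1, h2⟩ s hs
        rcases hs with rfl | hs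
        · simpa using h2
        · rw [Function.update_of_ne (by rintro rfl; exact htF hs)]; exact h1 s hs
      · intro h
        constructor
        · intro s hs
          rw [← Function.update_of_ne (show s ≠ t by rintro rfl; exact htF hs) v f]
          exact h s (Or.inr hs)
        · simpa using h t (Or.inl rfl)
    have hdis' : Disjoint (insert t F) T' := by
      rw [Finset.disjoint_insert_left]
      exact ⟨ht, (Finset.disjoint_insert_right.mp hdis).2⟩
    have hcard' : ∀ v : Fin N, ((insert t F) ∪ T')ᶜ.card = k + 1 := by
      intro v
      rw [Finset.insert_union, ← Finset.union_insert]
      exact hc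
    calc ∑ v : Fin N, ∑ g ∈ (univ.filter (fun g : Fin m → Fin N => ∀ s ∈ F, g s = f s)).filter
            (fun g => g t = v), A g * ∏ s ∈ insert t T', q (g s)
        = ∑ v : Fin N, q v * (N : ℝ) ^ k := by
          refine Finset.sum_congr rfl fun v _ => ?_
          rw [key v]
          rw [show (∑ g ∈ univ.filter (fun g : Fin m → Fin N =>
              ∀ s ∈ insert t F, g s = Function.update f t v s),
              A g * ∏ s ∈ insert t T', q (g s))
            = ∑ g ∈ univ.filter (fun g : Fin m → Fin N =>
              ∀ s ∈ insert t F, g s = Function.update f t v s),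
              q v * (A g * ∏ s ∈ T', q (g s)) from ?_]
          · rw [← Finset.mul_sum, ih (insert t F) (Function.update f t v) k hdis' (hcard' v)]
          · refine Finset.sum_congr rfl fun g hg => ?_
            simp only [Finset.mem_filter, Finset.mem_univ, true_and] at hg
            have hgt : g t = v := by simpa using hg t (Finset.mem_insert_self t F)
            rw [Finset.prod_insert ht, hgt]
            ring
      _ = (N : ℝ) ^ k := by rw [← Finset.sum_mul, hq, one_mul]
set_option maxHeartbeats 1600000

noncomputable def Cmat {N m : ℕ} (A : (Fin m → Fin N) → ℝ) (t0 t1 : Fin m)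
    (q : Fin N → ℝ) (i j : Fin N) : ℝ :=
  ∑ g ∈ univ.filter (fun g : Fin m → Fin N => g t0 = i ∧ g t1 = j),
    A g * ∏ s ∈ (univ.erase t0).erase t1, q (g s)

lemma act_eq {N m : ℕ} (A : (Fin m → Fin N) → ℝ) {t0 t1 : Fin m} (h01 : t0 ≠ t1)
    (q : Fin N → ℝ) (i : Fin N) :
    mAct A t0 (fun _ => q) i = ∑ j, Cmat A t0 t1 q i j * q j := by
  have ht1 : t1 ∈ univ.erase t0 := Finset.mem_erase.mpr ⟨Ne.symm h01, Finset.mem_univ _⟩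
  unfold mAct Cmat
  rw [← Finset.sum_filter]
  calc ∑ g ∈ univ.filter (fun g : Fin m → Fin N => g t0 = i),
        A g * ∏ s ∈ univ.erase t0, q (g s)
      = ∑ g ∈ univ.filter (fun g : Fin m → Fin N => g t0 = i),
        q (g t1) * (A g * ∏ s ∈ (univ.erase t0).erase t1, q (g s)) := by
        refine Finset.sum_congr rfl fun g _ => ?_
        rw [← Finset.mul_prod_erase (univ.erase t0) (fun s => q (g s)) ht1]
        ring
    _ = ∑ j, ∑ g ∈ (univ.filter (fun g : Fin m → Fin N => g t0 = i)).filter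
          (fun g => g t1 = j),
          q (g t1) * (A g * ∏ s ∈ (univ.erase t0).erase t1, q (g s)) :=
        (Finset.sum_fiberwise (univ.filter (fun g : Fin m → Fin N => g t0 = i)) (fun g => g t1)
          (fun g => q (g t1) * (A g * ∏ s ∈ (univ.erase t0).erase t1, q (g s)))).symm
    _ = ∑ j, ∑ g ∈ (univ.filter (fun g : Fin m → Fin N => g t0 = i)).filter
          (fun g => g t1 = j),
          q j * (A g * ∏ s ∈ (univ.erase t0).erase t1, q (g s)) := by
        refine Finset.sum_congr rfl fun j _ => Finset.sum_congr rfl fun g hg => ?_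
        rw [Finset.mem_filter] at hg
        rw [hg.2]
    _ = ∑ j, (∑ g ∈ univ.filter (fun g : Fin m → Fin N => g t0 = i ∧ g t1 = j),
          A g * ∏ s ∈ (univ.erase t0).erase t1, q (g s)) * q j := by
        refine Finset.sum_congr rfl fun j _ => ?_
        rw [Finset.filter_filter, ← Finset.mul_sum, mul_comm]

lemma Cmat_row {N m : ℕ} {A : (Fin m → Fin N) → ℝ} (hA : MStochastic A)
    {t0 t1 : Fin m} (h01 : t0 ≠ t1) {q : Fin N → ℝ} (hq : ∑ j, q j = 1) (i : Fin N) :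
    ∑ j, Cmat A t0 t1 q i j = 1 := by
  unfold Cmat
  have : ∀ j, univ.filter (fun g : Fin m → Fin N => g t0 = i ∧ g t1 = j)
      = (univ.filter (fun g : Fin m → Fin N => g t0 = i)).filter (fun g => g t1 = j) := by
    intro j; rw [Finset.filter_filter]
  rw [Finset.sum_congr rfl fun j _ => by rw [this j]]
  rw [Finset.sum_fiberwise (univ.filter (fun g : Fin m → Fin N => g t0 = i))
    (fun g => g t1) (fun g => A g * ∏ s ∈ (univ.erase t0).erase t1, q (g s))]
  have hset : univ.filter (fun g : Fin m → Fin N => g t0 = i)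
      = univ.filter (fun g : Fin m → Fin N => ∀ s ∈ ({t0} : Finset (Fin m)), g s = (fun _ => i) s) := by
    ext g; simp
  rw [hset]
  have hdis : Disjoint ({t0} : Finset (Fin m)) ((univ.erase t0).erase t1) := by
    simp [Finset.disjoint_singleton_left]
  have hcard : (({t0} : Finset (Fin m)) ∪ (univ.erase t0).erase t1)ᶜ.card = 0 + 1 := by
    have huni : ({t0} : Finset (Fin m)) ∪ (univ.erase t0).erase t1 = univ.erase t1 := by
      ext s
      simp only [Finset.mem_union, Finset.mem_singleton, Finset.mem_erase, Finset.mem_univ,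
        and_true]
      constructor
      · rintro (rfl | ⟨hs1, _⟩)
        · exact Ne.symm (by exact fun h => h01 h.symm)
        · exact hs1
      · intro hs
        by_cases h : s = t0
        · exact Or.inl h
        · exact Or.inr ⟨hs, h⟩
    rw [huni]
    rw [show (univ.erase t1 : Finset (Fin m)) = ({t1} : Finset (Fin m))ᶜ by
      rw [Finset.compl_singleton], compl_compl]
    simp
  rw [wmarginal_sum hA hq ((univ.erase t0).erase t1) {t0} (fun _ => i) 0 hdis hcard]
  simp

lemma Cmat_col {N m : ℕ} {A : (Fin m → Fin N) → ℝ} (hA : MStochastic A)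
    {t0 t1 : Fin m} (h01 : t0 ≠ t1) {q : Fin N → ℝ} (hq : ∑ j, q j = 1) (j : Fin N) :
    ∑ i, Cmat A t0 t1 q i j = 1 := by
  unfold Cmat
  have : ∀ i, univ.filter (fun g : Fin m → Fin N => g t0 = i ∧ g t1 = j)
      = (univ.filter (fun g : Fin m → Fin N => g t1 = j)).filter (fun g => g t0 = i) := by
    intro i; rw [Finset.filter_filter]; apply Finset.filter_congr; intro g _; exact and_comm
  rw [Finset.sum_congr rfl fun i _ => by rw [this i]]
  rw [Finset.sum_fiberwise (univ.filter (fun g : Fin m → Fin N => g t1 = j))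
    (fun g => g t0) (fun g => A g * ∏ s ∈ (univ.erase t0).erase t1, q (g s))]
  have hset : univ.filter (fun g : Fin m → Fin N => g t1 = j)
      = univ.filter (fun g : Fin m → Fin N => ∀ s ∈ ({t1} : Finset (Fin m)), g s = (fun _ => j) s) := by
    ext g; simp
  rw [hset]
  have hdis : Disjoint ({t1} : Finset (Fin m)) ((univ.erase t0).erase t1) := by
    simp [Finset.disjoint_singleton_left]
  have hcard : (({t1} : Finset (Fin m)) ∪ (univ.erase t0).erase t1)ᶜ.card = 0 + 1 := by
    have huni : ({t1} : Finset (Fin m)) ∪ (univ.erase t0).erase t1 = univ.erase t0 := by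
      ext s
      simp only [Finset.mem_union, Finset.mem_singleton, Finset.mem_erase, Finset.mem_univ,
        and_true]
      constructor
      · rintro (rfl | ⟨_, hs0⟩)
        · exact fun h => h01 h.symm
        · exact hs0
      · intro hs
        by_cases h : s = t1
        · exact Or.inl h
        · exact Or.inr ⟨h, hs⟩
    rw [huni]
    rw [show (univ.erase t0 : Finset (Fin m)) = ({t0} : Finset (Fin m))ᶜ by
      rw [Finset.compl_singleton], compl_compl]
    simp
  rw [wmarginal_sum hA hq ((univ.erase t0).erase t1) {t1} (fun _ => j) 0 hdis hcard]
  simp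
lemma Cmat_nonneg {N m : ℕ} {A : (Fin m → Fin N) → ℝ} (hA : MStochastic A)
    (t0 t1 : Fin m) {q : Fin N → ℝ} (hq : ∀ j, 0 ≤ q j) (i j : Fin N) :
    0 ≤ Cmat A t0 t1 q i j := by
  refine Finset.sum_nonneg fun g _ => mul_nonneg (hA.1 g) (Finset.prod_nonneg fun s _ => hq _)

lemma Cmat_lb {N m : ℕ} {A : (Fin m → Fin N) → ℝ} (hA : MStochastic A)
    {t0 t1 : Fin m} (h01 : t0 ≠ t1) (hm : 3 ≤ m) {β : ℝ} (hβ : 0 ≤ β)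
    {q : Fin N → ℝ} (hq : ∀ j, β ≤ q j) (i j : Fin N) :
    β ^ (m - 2) * (N : ℝ) ^ (m - 3) ≤ Cmat A t0 t1 q i j := by
  have hEcard : ((univ.erase t0).erase t1).card = m - 2 := by
    have ht1 : t1 ∈ univ.erase t0 := Finset.mem_erase.mpr ⟨Ne.symm h01, Finset.mem_univ _⟩
    rw [Finset.card_erase_of_mem ht1, Finset.card_erase_of_mem (Finset.mem_univ _),
      Finset.card_univ, Fintype.card_fin]
    omega
  set f : Fin m → Fin N := fun s => if s = t0 then i else j with hf
  have hset : univ.filter (fun g : Fin m → Fin N => g t0 = i ∧ g t1 = j)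
      = univ.filter (fun g : Fin m → Fin N => ∀ s ∈ ({t0, t1} : Finset (Fin m)), g s = f s) := by
    ext g
    simp only [Finset.mem_filter, Finset.mem_univ, true_and, Finset.mem_insert,
      Finset.mem_singleton, hf]
    constructor
    · rintro ⟨h1, h2⟩ s hs
      rcases hs with rfl | rfl
      · simpa using h1
      · rw [if_neg (Ne.symm h01)]; exact h2
    · intro h
      refine ⟨by simpa using h t0 (Or.inl rfl), ?_⟩
      have := h t1 (Or.inr rfl)
      rwa [if_neg (Ne.symm h01)] at this
  have hcard : (({t0, t1} : Finset (Fin m))ᶜ).card = (m - 3) + 1 := by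
    rw [Finset.card_compl, Finset.card_insert_of_notMem (by simpa using h01),
      Finset.card_singleton, Fintype.card_fin]
    omega
  have hmarg := marginal_sum hA (m - 3) ({t0, t1} : Finset (Fin m)) f hcard
  calc β ^ (m - 2) * (N : ℝ) ^ (m - 3)
      = ∑ g ∈ univ.filter (fun g : Fin m → Fin N => ∀ s ∈ ({t0, t1} : Finset (Fin m)),
          g s = f s), β ^ (m - 2) * A g := by rw [← Finset.mul_sum, hmarg]
    _ ≤ ∑ g ∈ univ.filter (fun g : Fin m → Fin N => ∀ s ∈ ({t0, t1} : Finset (Fin m)),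
          g s = f s), A g * ∏ s ∈ (univ.erase t0).erase t1, q (g s) := by
        refine Finset.sum_le_sum fun g _ => ?_
        rw [mul_comm]
        refine mul_le_mul_of_nonneg_left ?_ (hA.1 g)
        calc β ^ (m - 2) = ∏ s ∈ (univ.erase t0).erase t1, β := by
              rw [Finset.prod_const, hEcard]
          _ ≤ ∏ s ∈ (univ.erase t0).erase t1, q (g s) :=
              Finset.prod_le_prod (fun s _ => hβ) (fun s _ => hq _)
    _ = Cmat A t0 t1 q i j := by rw [Cmat, hset]
theorem mAct_iterates_tendsto_uniform {N m : ℕ} (hm : 3 ≤ m)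
    (A : (Fin m → Fin N) → ℝ) (hA : MStochastic A)
    (α : ℝ) (hα : α ∈ Set.Ioc (0 : ℝ) 1)
    (p0 : Fin N → ℝ) (hp0 : p0 ∈ stdSimplex ℝ (Fin N))
    (q : ℕ → Fin N → ℝ)
    (hq0 : q 0 = fun i => α * (N : ℝ)⁻¹ + (1 - α) * p0 i)
    (hrec : ∀ n, q (n + 1) = mAct A ⟨0, by omega⟩ fun _ => q n) :
    Filter.Tendsto q Filter.atTop (nhds fun _ => (N : ℝ)⁻¹) := by
  obtain ⟨hα0, hα1⟩ := hα
  obtain ⟨k, rfl⟩ : ∃ k, m = k + 3 := ⟨m - 3, by omega⟩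
  have hN : 0 < N := by
    rcases Nat.eq_zero_or_pos N with h | h
    · exfalso
      have h2 := hp0.2
      subst h
      simp at h2
    · exact h
  have hNR : (0 : ℝ) < (N : ℝ) := by exact_mod_cast hN
  set ν : ℝ := (N : ℝ)⁻¹ with hν
  have hνpos : 0 < ν := inv_pos.mpr hNR
  set t0 : Fin (k + 3) := ⟨0, by omega⟩ with ht0
  set t1 : Fin (k + 3) := ⟨1, by omega⟩ with ht1
  have h01 : t0 ≠ t1 := by simp [ht0, ht1, Fin.ext_iff]
  have e2 : k + 3 - 2 = k + 1 := by omega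
  have e3 : k + 3 - 3 = k := by omega
  set β : ℝ := α * ν with hβ
  have hβpos : 0 < β := mul_pos hα0 hνpos
  -- the invariant
  have Hinv : ∀ n, (∀ i, β ≤ q n i) ∧ (∑ i, q n i) = 1 := by
    intro n
    induction n with
    | zero =>
      constructor
      · intro i
        rw [hq0]
        have : 0 ≤ (1 - α) * p0 i := mul_nonneg (by linarith) (hp0.1 i)
        simp only [hβ, hν]
        linarith
      · rw [hq0]
        rw [Finset.sum_add_distrib, Finset.sum_const, ← Finset.mul_sum, hp0.2,
          Finset.card_univ, Fintype.card_fin, nsmul_eq_mul]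
        rw [hβ, hν]
        field_simp
        ring
    | succ n ih =>
      have hq_lb := ih.1
      have hq_sum := ih.2
      have hq_nn : ∀ j, 0 ≤ q n j := fun j => le_trans hβpos.le (hq_lb j)
      have hact : ∀ i, q (n + 1) i = ∑ j, Cmat A t0 t1 (q n) i j * q n j := by
        intro i
        rw [hrec n]
        exact act_eq A h01 (q n) i
      constructor
      · intro i
        rw [hact i]
        calc β = (∑ j, Cmat A t0 t1 (q n) i j) * β := by
              rw [Cmat_row hA h01 hq_sum i, one_mul]
          _ = ∑ j, Cmat A t0 t1 (q n) i j * β := by rw [Finset.sum_mul]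
          _ ≤ ∑ j, Cmat A t0 t1 (q n) i j * q n j := by
              refine Finset.sum_le_sum fun j _ => ?_
              exact mul_le_mul_of_nonneg_left (hq_lb j) (Cmat_nonneg hA t0 t1 hq_nn i j)
      · calc ∑ i, q (n + 1) i = ∑ i, ∑ j, Cmat A t0 t1 (q n) i j * q n j :=
              Finset.sum_congr rfl fun i _ => hact i
          _ = ∑ j, ∑ i, Cmat A t0 t1 (q n) i j * q n j := Finset.sum_comm
          _ = ∑ j, (∑ i, Cmat A t0 t1 (q n) i j) * q n j := by
              refine Finset.sum_congr rfl fun j _ => ?_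
              rw [Finset.sum_mul]
          _ = ∑ j, q n j := by
              refine Finset.sum_congr rfl fun j _ => ?_
              rw [Cmat_col hA h01 hq_sum j, one_mul]
          _ = 1 := hq_sum
  -- lower bound on matrix entries
  set c : ℝ := α ^ (k + 1) * ν with hc
  have hc_le : ∀ n i j, c ≤ Cmat A t0 t1 (q n) i j := by
    intro n i j
    have := Cmat_lb hA h01 (by omega) hβpos.le (Hinv n).1 i j
    rw [e2, e3] at this
    refine le_trans (le_of_eq ?_) this
    rw [hβ, mul_pow, hc, hν]
    rw [show ((N:ℝ)⁻¹) ^ (k + 1) = (N:ℝ)⁻¹ ^ k * (N:ℝ)⁻¹ from pow_succ _ k]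
    rw [inv_pow]
    field_simp
  set r : ℝ := 1 - α ^ (k + 1) with hr
  have hα_pow_pos : 0 < α ^ (k + 1) := pow_pos hα0 _
  have hα_pow_le : α ^ (k + 1) ≤ 1 := pow_le_one₀ hα0.le hα1
  have hr0 : 0 ≤ r := by rw [hr]; linarith
  have hr1 : r < 1 := by rw [hr]; linarith
  set V : ℕ → ℝ := fun n => ∑ i, |q n i - ν| with hV
  have hNc : (N : ℝ) * c = α ^ (k + 1) := by
    rw [hc, hν]; field_simp
  have hkey : ∀ n, V (n + 1) ≤ r * V n := by
    intro n
    have hq_sum := (Hinv n).2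
    have hsum_d : ∑ j, (q n j - ν) = 0 := by
      rw [Finset.sum_sub_distrib, hq_sum, Finset.sum_const, Finset.card_univ,
        Fintype.card_fin, nsmul_eq_mul, hν]
      field_simp
      ring
    have hact : ∀ i, q (n + 1) i = ∑ j, Cmat A t0 t1 (q n) i j * q n j := by
      intro i
      rw [hrec n]
      exact act_eq A h01 (q n) i
    have step1 : ∀ i, q (n + 1) i - ν
        = ∑ j, (Cmat A t0 t1 (q n) i j - c) * (q n j - ν) := by
      intro i
      have hA1 : ∑ j, (Cmat A t0 t1 (q n) i j - c) * (q n j - ν)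
          = (∑ j, Cmat A t0 t1 (q n) i j * (q n j - ν)) - c * ∑ j, (q n j - ν) := by
        simp only [sub_mul]
        rw [Finset.sum_sub_distrib, ← Finset.mul_sum]
      have hA2 : ∑ j, Cmat A t0 t1 (q n) i j * (q n j - ν)
          = (∑ j, Cmat A t0 t1 (q n) i j * q n j)
            - (∑ j, Cmat A t0 t1 (q n) i j) * ν := by
        simp only [mul_sub]
        rw [Finset.sum_sub_distrib, ← Finset.sum_mul]
      rw [hA1, hA2, hsum_d, Cmat_row hA h01 hq_sum i, hact i]
      ring
    have step2 : ∀ i, |q (n + 1) i - ν|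
        ≤ ∑ j, (Cmat A t0 t1 (q n) i j - c) * |q n j - ν| := by
      intro i
      rw [step1 i]
      refine le_trans (Finset.abs_sum_le_sum_abs _ _) ?_
      refine Finset.sum_le_sum fun j _ => ?_
      rw [abs_mul, abs_of_nonneg (sub_nonneg.mpr (hc_le n i j))]
    calc V (n + 1) ≤ ∑ i, ∑ j, (Cmat A t0 t1 (q n) i j - c) * |q n j - ν| :=
          Finset.sum_le_sum fun i _ => step2 i
      _ = ∑ j, (∑ i, (Cmat A t0 t1 (q n) i j - c)) * |q n j - ν| := by
          rw [Finset.sum_comm]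
          refine Finset.sum_congr rfl fun j _ => ?_
          rw [Finset.sum_mul]
      _ = ∑ j, r * |q n j - ν| := by
          refine Finset.sum_congr rfl fun j _ => ?_
          rw [Finset.sum_sub_distrib, Cmat_col hA h01 hq_sum j, Finset.sum_const,
            Finset.card_univ, Fintype.card_fin, nsmul_eq_mul, hNc, ← hr]
      _ = r * V n := by rw [← Finset.mul_sum]
  have hVbound : ∀ n, V n ≤ V 0 * r ^ n := by
    intro n
    induction n with
    | zero => simp
    | succ n ih =>
      calc V (n + 1) ≤ r * V n := hkey n
        _ ≤ r * (V 0 * r ^ n) := mul_le_mul_of_nonneg_left ih hr0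
        _ = V 0 * r ^ (n + 1) := by ring
  rw [tendsto_pi_nhds]
  intro i
  rw [tendsto_iff_dist_tendsto_zero]
  have htend : Filter.Tendsto (fun n => V 0 * r ^ n) Filter.atTop (nhds 0) := by
    have := (tendsto_pow_atTop_nhds_zero_of_lt_one hr0 hr1).const_mul (V 0)
    simpa using this
  refine squeeze_zero (fun n => dist_nonneg) (fun n => ?_) htend
  calc dist (q n i) ν = |q n i - ν| := Real.dist_eq _ _
    _ ≤ V n := Finset.single_le_sum (f := fun j => |q n j - ν|)
          (fun j _ => abs_nonneg _) (Finset.mem_univ i)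
    _ ≤ V 0 * r ^ n := hVbound n
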